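/- With Ω, n, 1, r as above (∑ d_{l+1} = 1) and writing μ = ∑_{l=0}^κ l d_{l+1} − 1 (so r = τμ − γ), assume μ ≠ 0. Then for all t ≥ 0: exp(Ω t) 1 = μ^{-1} (e^{r t} − e^{−γ t}) n + e^{−γ t} 1 and exp(Ω t) n = e^{r t} n. -/

import Mathlib

open Finset
open scoped Matrix

lemma exp_mulVec_eig {m : ℕ} (A : Matrix (Fin m) (Fin m) ℝ) (v : Fin m → ℝ) (c : ℝ)
    (h : A.mulVec v = c • v) :
    (NormedSpace.exp A).mulVec v = Real.exp c • v := by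
  letI : NormedRing (Matrix (Fin m) (Fin m) ℝ) := Matrix.linftyOpNormedRing
  letI : NormedAlgebra ℝ (Matrix (Fin m) (Fin m) ℝ) := Matrix.linftyOpNormedAlgebra
  have hpow : ∀ k : ℕ, (A ^ k).mulVec v = c ^ k • v := by
    intro k
    induction k with
    | zero => simp [Matrix.one_mulVec]
    | succ k ih =>
        rw [pow_succ, ← Matrix.mulVec_mulVec, h, Matrix.mulVec_smul, ih, smul_smul, pow_succ, mul_comm]
  have hsummable : Summable fun k : ℕ => ((k.factorial : ℝ)⁻¹) • A ^ k :=
    NormedSpace.expSeries_summable' (𝕂 := ℝ) A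
  let L : Matrix (Fin m) (Fin m) ℝ →ₗ[ℝ] (Fin m → ℝ) :=
    { toFun := fun B => B.mulVec v
      map_add' := fun B C => Matrix.add_mulVec B C v
      map_smul' := fun s B => Matrix.smul_mulVec s B v }
  have hL : Continuous L := L.continuous_of_finiteDimensional
  have := (L.toContinuousLinearMap).map_tsum hsummable
  rw [NormedSpace.exp_eq_tsum (𝕂 := ℝ)]
  have hLeq : ∀ B : Matrix (Fin m) (Fin m) ℝ, L B = B.mulVec v := fun _ => rfl
  calc (∑' k : ℕ, ((k.factorial : ℝ)⁻¹) • A ^ k).mulVec v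
      = L (∑' k : ℕ, ((k.factorial : ℝ)⁻¹) • A ^ k) := rfl
    _ = ∑' k : ℕ, L (((k.factorial : ℝ)⁻¹) • A ^ k) := by
        exact L.toContinuousLinearMap.map_tsum hsummable
    _ = ∑' k : ℕ, ((k.factorial : ℝ)⁻¹ * c ^ k) • v := by
        refine tsum_congr fun k => ?_
        rw [hLeq, Matrix.smul_mulVec, hpow, smul_smul]
    _ = (∑' k : ℕ, (k.factorial : ℝ)⁻¹ * c ^ k) • v := by
        rw [Summable.tsum_smul_const]
        exact (NormedSpace.expSeries_summable' (𝕂 := ℝ) c).congr (fun k => smul_eq_mul ..)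
    _ = Real.exp c • v := by
        congr 1
        rw [Real.exp_eq_exp_ℝ, NormedSpace.exp_eq_tsum (𝕂 := ℝ)]
        exact tsum_congr fun k => (smul_eq_mul ..).symm


lemma stmt_5_eigen (κ : ℕ) (τ γ : ℝ)
    (d : ℕ → ℝ) (hd : ∀ k, 0 ≤ d k) (hd' : ∀ k, κ < k → d k = 0)
    (hsum : ∑ l ∈ range (κ+1), d (l + 1) = 1)
    (Ω : Matrix (Fin (κ+1)) (Fin (κ+1)) ℝ)
    (hΩ : ∀ l k : Fin (κ+1),
      Ω l k = τ * (l : ℝ) * (d (k + 1) + (if (l : ℕ) = (k : ℕ) + 1 then 1 else 0))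
              - (γ + τ * (l : ℝ)) * (if l = k then 1 else 0))
    (n : Fin (κ+1) → ℝ) (hn : ∀ i, n i = (i : ℝ))
    (one : Fin (κ+1) → ℝ) (hone : ∀ i, one i = 1)
    (μ : ℝ) (hμ : μ = (∑ l ∈ range (κ+1), (l : ℝ) * d (l + 1)) - 1) (hμ0 : μ ≠ 0)
    (r : ℝ) (hr : r = τ * μ - γ) :
    (Ω.mulVec n = r • n) ∧ (Ω.mulVec one = τ • n - γ • one) := by
  subst hr
  have hμ' : (∑ k : Fin (κ+1), (k : ℝ) * d ((k : ℕ) + 1)) = μ + 1 := by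
    rw [Fin.sum_univ_eq_sum_range (fun i => (i : ℝ) * d (i + 1)) (κ+1), hμ]; ring
  have hsum' : (∑ k : Fin (κ+1), d ((k : ℕ) + 1)) = 1 := by
    rw [Fin.sum_univ_eq_sum_range (fun i => d (i + 1)) (κ+1)]; exact hsum
  constructor
  · funext l
    show ∑ k, Ω l k * n k = (τ * μ - γ) * n l
    have expand : ∀ k : Fin (κ+1), Ω l k * n k
        = τ * (l : ℝ) * ((k : ℝ) * d ((k : ℕ) + 1))
          + τ * (l : ℝ) * (if (l : ℕ) = (k : ℕ) + 1 then (k : ℝ) else 0)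
          - (γ + τ * (l : ℝ)) * (if l = k then (l : ℝ) else 0) := by
      intro k
      rw [hΩ, hn]
      by_cases h2 : l = k
      · subst h2; simp only [if_pos rfl]; split_ifs <;> ring
      · simp only [if_neg h2]; split_ifs <;> ring
    rw [Finset.sum_congr rfl (fun k _ => expand k), Finset.sum_sub_distrib,
      Finset.sum_add_distrib, ← Finset.mul_sum, ← Finset.mul_sum, ← Finset.mul_sum, hμ']
    have hS : τ * (l : ℝ) * (∑ k : Fin (κ+1), if (l : ℕ) = (k : ℕ) + 1 then (k : ℝ) else 0)
        = τ * (l : ℝ) * ((l : ℝ) - 1) := by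
      rcases Nat.eq_zero_or_pos (l : ℕ) with h0 | hpos
      · have hc : ∀ k : Fin (κ+1), ¬ ((l : ℕ) = (k : ℕ) + 1) := by intro k; omega
        simp [hc, h0]
      · obtain ⟨m, hm⟩ : ∃ m, (l : ℕ) = m + 1 := ⟨(l : ℕ) - 1, by omega⟩
        have hmlt : m < κ + 1 := by omega
        have hval : (∑ k : Fin (κ+1), if (l : ℕ) = (k : ℕ) + 1 then (k : ℝ) else 0)
            = ((m : ℕ) : ℝ) := by
          rw [Finset.sum_eq_single (⟨m, hmlt⟩ : Fin (κ+1))]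
          · simp [hm]
          · intro b _ hb
            rw [if_neg]
            intro hc
            exact hb (Fin.ext (show (b:ℕ) = m by omega))
          · simp
        rw [hval, hm]
        push_cast
        ring
    rw [hS]
    have : (∑ k : Fin (κ+1), if l = k then (l : ℝ) else 0) = (l : ℝ) := by
      simp
    rw [this, hn]
    ring
  · funext l
    show ∑ k, Ω l k * one k = (τ • n - γ • one) l
    have expand : ∀ k : Fin (κ+1), Ω l k * one k
        = τ * (l : ℝ) * d ((k : ℕ) + 1)
          + τ * (l : ℝ) * (if (l : ℕ) = (k : ℕ) + 1 then (1 : ℝ) else 0)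
          - (γ + τ * (l : ℝ)) * (if l = k then (1 : ℝ) else 0) := by
      intro k
      rw [hΩ, hone]
      split_ifs <;> ring
    rw [Finset.sum_congr rfl (fun k _ => expand k), Finset.sum_sub_distrib,
      Finset.sum_add_distrib, ← Finset.mul_sum, ← Finset.mul_sum, ← Finset.mul_sum, hsum']
    have hS : τ * (l : ℝ) * (∑ k : Fin (κ+1), if (l : ℕ) = (k : ℕ) + 1 then (1 : ℝ) else 0)
        = τ * (l : ℝ) := by
      rcases Nat.eq_zero_or_pos (l : ℕ) with h0 | hpos
      · have hc : ∀ k : Fin (κ+1), ¬ ((l : ℕ) = (k : ℕ) + 1) := by intro k; omega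
        simp [hc, h0]
      · obtain ⟨m, hm⟩ : ∃ m, (l : ℕ) = m + 1 := ⟨(l : ℕ) - 1, by omega⟩
        have hmlt : m < κ + 1 := by omega
        have hval : (∑ k : Fin (κ+1), if (l : ℕ) = (k : ℕ) + 1 then (1 : ℝ) else 0)
            = 1 := by
          rw [Finset.sum_eq_single (⟨m, hmlt⟩ : Fin (κ+1))]
          · simp [hm]
          · intro b _ hb
            rw [if_neg]
            intro hc
            exact hb (Fin.ext (show (b:ℕ) = m by omega))
          · simp
        rw [hval]; ring
    rw [hS]
    have : (∑ k : Fin (κ+1), if l = k then (1 : ℝ) else 0) = 1 := by simp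
    rw [this]
    simp [hn l, hone l]


theorem stmt_5 (κ : ℕ) (τ γ : ℝ)
    (d : ℕ → ℝ) (hd : ∀ k, 0 ≤ d k) (hd' : ∀ k, κ < k → d k = 0)
    (hsum : ∑ l ∈ range (κ+1), d (l + 1) = 1)
    (Ω : Matrix (Fin (κ+1)) (Fin (κ+1)) ℝ)
    (hΩ : ∀ l k : Fin (κ+1),
      Ω l k = τ * (l : ℝ) * (d (k + 1) + (if (l : ℕ) = (k : ℕ) + 1 then 1 else 0))
              - (γ + τ * (l : ℝ)) * (if l = k then 1 else 0))
    (n : Fin (κ+1) → ℝ) (hn : ∀ i, n i = (i : ℝ))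
    (one : Fin (κ+1) → ℝ) (hone : ∀ i, one i = 1)
    (μ : ℝ) (hμ : μ = (∑ l ∈ range (κ+1), (l : ℝ) * d (l + 1)) - 1) (hμ0 : μ ≠ 0)
    (r : ℝ) (hr : r = τ * μ - γ) :
    ∀ t : ℝ, 0 ≤ t →
      (NormedSpace.exp (t • Ω)).mulVec one
        = (μ⁻¹ * (Real.exp (r * t) - Real.exp (-γ * t))) • n
          + Real.exp (-γ * t) • one ∧
      (NormedSpace.exp (t • Ω)).mulVec n = Real.exp (r * t) • n := by
  obtain ⟨hN, hOne⟩ := stmt_5_eigen κ τ γ d hd hd' hsum Ω hΩ n hn one hone μ hμ hμ0 r hr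
  have hv : Ω.mulVec (one - μ⁻¹ • n) = (-γ) • (one - μ⁻¹ • n) := by
    rw [Matrix.mulVec_sub, Matrix.mulVec_smul, hN, hOne]
    funext i
    simp only [Pi.sub_apply, Pi.smul_apply, smul_eq_mul, Pi.add_apply]
    rw [hr]
    field_simp
    ring
  intro t _
  have e1 : (NormedSpace.exp (t • Ω)).mulVec n = Real.exp (r * t) • n := by
    have := exp_mulVec_eig (t • Ω) n (r * t)
      (by rw [Matrix.smul_mulVec, hN, smul_smul, mul_comm])
    exact this
  have e2 : (NormedSpace.exp (t • Ω)).mulVec (one - μ⁻¹ • n)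
      = Real.exp (-γ * t) • (one - μ⁻¹ • n) := by
    have := exp_mulVec_eig (t • Ω) (one - μ⁻¹ • n) (-γ * t)
      (by rw [Matrix.smul_mulVec, hv, smul_smul, mul_comm])
    exact this
  refine ⟨?_, e1⟩
  have hdecomp : one = (one - μ⁻¹ • n) + μ⁻¹ • n := by abel
  conv_lhs => rw [hdecomp]
  rw [Matrix.mulVec_add, Matrix.mulVec_smul, e1, e2]
  funext i
  simp only [Pi.add_apply, Pi.smul_apply, Pi.sub_apply, smul_eq_mul]
  ring
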